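/- Let P(z) = z + z² ∈ ℂ_p[z] and let B = {z ∈ ℂ_p : |z| < 1}. For every rational function R ∈ ℂ_p(z) without poles in B, one has sup{ |R(P(z)) − z| : z ∈ B } ≥ 1; equivalently, for every ε > 0 there exists z ∈ B with |R(P(z)) − z| > 1 − ε. -/

import Mathlib

open Polynomial Finset

section Aux

variable {K : Type*} [NontriviallyNormedField K] [IsUltrametricDist K]

/-- Ultrametric: adding something strictly smaller does not change the norm. -/
lemma PadicCE.norm_add_eq_left {a b : K} (h : ‖b‖ < ‖a‖) : ‖a + b‖ = ‖a‖ := by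
  refine le_antisymm ((IsUltrametricDist.norm_add_le_max a b).trans (by simp [h.le])) ?_
  have h2 : ‖a‖ ≤ max ‖a + b‖ ‖b‖ := by
    simpa using IsUltrametricDist.norm_add_le_max (a + b) (-b)
  rcases max_cases ‖a + b‖ ‖b‖ with ⟨he, _⟩ | ⟨he, _⟩
  · rwa [he] at h2
  · rw [he] at h2; exact absurd (h2.trans_lt h) (lt_irrefl _)

lemma PadicCE.norm_sub_eq_left {a b : K} (h : ‖b‖ < ‖a‖) : ‖a - b‖ = ‖a‖ := by
  rw [sub_eq_add_neg]
  exact PadicCE.norm_add_eq_left (by simpa using h)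

/-- Ultrametric: a finite sum of elements of norm `< A` has norm `< A`. -/
lemma PadicCE.norm_sum_lt {ι : Type*} {s : Finset ι} {f : ι → K} {A : ℝ} (hA : 0 < A)
    (h : ∀ i ∈ s, ‖f i‖ < A) : ‖∑ i ∈ s, f i‖ < A := by
  rcases s.eq_empty_or_nonempty with rfl | hs
  · simpa using hA
  · obtain ⟨i, hi, hle⟩ := IsUltrametricDist.exists_norm_finset_sum_le_of_nonempty hs f
    exact hle.trans_lt (h i hi)

/-- A nonzero polynomial has a last coefficient of maximal norm. -/
lemma PadicCE.exists_max_coeff (q : K[X]) (hq : q ≠ 0) :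
    ∃ m, q.coeff m ≠ 0 ∧ (∀ k, ‖q.coeff k‖ ≤ ‖q.coeff m‖) ∧
      ∀ k, m < k → ‖q.coeff k‖ < ‖q.coeff m‖ := by
  classical
  set R : Finset ℕ := Finset.range (q.natDegree + 1) with hR
  set S : Finset ℕ := R.filter (fun n => ∀ k ∈ R, ‖q.coeff k‖ ≤ ‖q.coeff n‖) with hS
  have hSne : S.Nonempty := by
    obtain ⟨b, hb, hbm⟩ := Finset.exists_max_image R (fun n => ‖q.coeff n‖)
      ⟨0, by simp [hR]⟩
    exact ⟨b, by simp only [hS, Finset.mem_filter]; exact ⟨hb, hbm⟩⟩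
  set m := S.max' hSne with hm
  have hmS : m ∈ S := S.max'_mem hSne
  rw [hS, Finset.mem_filter] at hmS
  have hball : ∀ k, ‖q.coeff k‖ ≤ ‖q.coeff m‖ := by
    intro k
    by_cases hk : k ∈ R
    · exact hmS.2 k hk
    · have : q.coeff k = 0 := by
        refine q.coeff_eq_zero_of_natDegree_lt ?_
        simpa [hR, Nat.lt_succ_iff] using hk
      simp [this]
  have hmne : q.coeff m ≠ 0 := by
    intro h0
    have h1 : ‖q.coeff q.natDegree‖ ≤ 0 := by have := hball q.natDegree; rwa [h0, norm_zero] at this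
    have h2 : q.coeff q.natDegree ≠ 0 := by
      rw [← Polynomial.leadingCoeff]
      exact Polynomial.leadingCoeff_ne_zero.mpr hq
    exact h2 (by simpa using le_antisymm h1 (norm_nonneg _))
  refine ⟨m, hmne, hball, fun k hk => ?_⟩
  rcases lt_or_eq_of_le (hball k) with h | h
  · exact h
  · exfalso
    have hkR : k ∈ R := by
      by_contra hkR
      have : q.coeff k = 0 := by
        refine q.coeff_eq_zero_of_natDegree_lt ?_
        simpa [hR, Nat.lt_succ_iff] using hkR
      rw [this] at h
      exact hmne (by simpa using h.symm)
    have hkS : k ∈ S := by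
      rw [hS, Finset.mem_filter]
      exact ⟨hkR, fun j hj => (hmS.2 j hj).trans_eq h.symm⟩
    exact absurd (Finset.le_max' S k hkS) (not_le.mpr hk)

end Aux
section Comp

variable {K : Type*} [NontriviallyNormedField K] [IsUltrametricDist K]

omit [IsUltrametricDist K] in
lemma PadicCE.coeff_P_pow (n j : ℕ) :
    ((X + X ^ 2 : K[X]) ^ n).coeff j =
      if n ≤ j then ((n.choose (j - n) : ℕ) : K) else 0 := by
  have hP : (X + X ^ 2 : K[X]) = (1 + X) * X ^ 1 := by ring
  rw [hP, mul_pow, ← pow_mul, one_mul, Polynomial.coeff_mul_X_pow']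
  split_ifs with h
  · rw [Polynomial.coeff_one_add_X_pow]
  · rfl

omit [IsUltrametricDist K] in
lemma PadicCE.coeff_comp (q : K[X]) (j : ℕ) :
    (q.comp (X + X ^ 2)).coeff j =
      ∑ n ∈ q.support, q.coeff n * ((X + X ^ 2 : K[X]) ^ n).coeff j := by
  rw [Polynomial.comp_eq_sum_left, Polynomial.sum, Polynomial.finset_sum_coeff]
  simp [Polynomial.coeff_C_mul]

/-- Bounds on the coefficients of `q ∘ P` where `P = X + X²`. -/
lemma PadicCE.comp_coeff_le (hnat : ∀ n : ℕ, ‖(n : K)‖ ≤ 1) (q : K[X]) {A : ℝ}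
    (hA : ∀ k, ‖q.coeff k‖ ≤ A) (j : ℕ) :
    ‖(q.comp (X + X ^ 2)).coeff j‖ ≤ A := by
  rw [PadicCE.coeff_comp]
  refine IsUltrametricDist.norm_sum_le_of_forall_le_of_nonneg
    ((norm_nonneg (q.coeff 0)).trans (hA 0)) (fun n _ => ?_)
  rw [norm_mul]
  calc ‖q.coeff n‖ * ‖((X + X ^ 2 : K[X]) ^ n).coeff j‖
      ≤ A * 1 := by
        refine mul_le_mul (hA n) ?_ (norm_nonneg _) ((norm_nonneg _).trans (hA n))
        rw [PadicCE.coeff_P_pow]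
        split_ifs
        · exact hnat _
        · simp
    _ = A := mul_one A

lemma PadicCE.comp_coeff_eq (hnat : ∀ n : ℕ, ‖(n : K)‖ ≤ 1) (q : K[X]) {m : ℕ}
    (hm0 : q.coeff m ≠ 0) (hmlt : ∀ k, m < k → ‖q.coeff k‖ < ‖q.coeff m‖) :
    ‖(q.comp (X + X ^ 2)).coeff (2 * m)‖ = ‖q.coeff m‖ := by
  classical
  have hmem : m ∈ q.support := Polynomial.mem_support_iff.mpr hm0
  rw [PadicCE.coeff_comp]
  rw [← Finset.add_sum_erase _ _ hmem]
  have hterm : q.coeff m * ((X + X ^ 2 : K[X]) ^ m).coeff (2 * m) = q.coeff m := by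
    rw [PadicCE.coeff_P_pow, if_pos (by omega)]
    have : 2 * m - m = m := by omega
    rw [this, Nat.choose_self]
    simp
  rw [hterm]
  refine PadicCE.norm_add_eq_left ?_
  refine PadicCE.norm_sum_lt (norm_pos_iff.mpr hm0) (fun n hn => ?_)
  rcases lt_or_ge m n with hlt | hle
  · rw [norm_mul]
    calc ‖q.coeff n‖ * ‖((X + X ^ 2 : K[X]) ^ n).coeff (2 * m)‖
        ≤ ‖q.coeff n‖ * 1 := by
          refine mul_le_mul_of_nonneg_left ?_ (norm_nonneg _)
          rw [PadicCE.coeff_P_pow]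
          split_ifs
          · exact hnat _
          · simp
      _ = ‖q.coeff n‖ := mul_one _
      _ < ‖q.coeff m‖ := hmlt n hlt
  · have hne : n ≠ m := Finset.ne_of_mem_erase hn
    have hnm : n < m := lt_of_le_of_ne hle hne
    have : ((X + X ^ 2 : K[X]) ^ n).coeff (2 * m) = 0 := by
      rw [PadicCE.coeff_P_pow, if_pos (by omega)]
      rw [Nat.choose_eq_zero_of_lt (by omega)]
      simp
    rw [this, mul_zero, norm_zero]
    exact norm_pos_iff.mpr hm0

lemma PadicCE.comp_coeff_lt (hnat : ∀ n : ℕ, ‖(n : K)‖ ≤ 1) (q : K[X]) {m : ℕ}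
    (hm0 : q.coeff m ≠ 0) (hmlt : ∀ k, m < k → ‖q.coeff k‖ < ‖q.coeff m‖)
    {j : ℕ} (hj : 2 * m < j) :
    ‖(q.comp (X + X ^ 2)).coeff j‖ < ‖q.coeff m‖ := by
  rw [PadicCE.coeff_comp]
  refine PadicCE.norm_sum_lt (norm_pos_iff.mpr hm0) (fun n _ => ?_)
  rcases le_or_gt n m with hle | hlt
  · have : ((X + X ^ 2 : K[X]) ^ n).coeff j = 0 := by
      rw [PadicCE.coeff_P_pow]
      split_ifs with h
      · rw [Nat.choose_eq_zero_of_lt (by omega)]; simp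
      · rfl
    rw [this, mul_zero, norm_zero]
    exact norm_pos_iff.mpr hm0
  · rw [norm_mul]
    calc ‖q.coeff n‖ * ‖((X + X ^ 2 : K[X]) ^ n).coeff j‖
        ≤ ‖q.coeff n‖ * 1 := by
          refine mul_le_mul_of_nonneg_left ?_ (norm_nonneg _)
          rw [PadicCE.coeff_P_pow]
          split_ifs
          · exact hnat _
          · simp
      _ = ‖q.coeff n‖ := mul_one _
      _ < ‖q.coeff m‖ := hmlt n hlt

end Comp
section Main

variable {K : Type*} [NontriviallyNormedField K] [IsUltrametricDist K]

lemma PadicCE.norm_multiset_prod (m : Multiset K) :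
    ‖m.prod‖ = (m.map (fun x => ‖x‖)).prod := by
  induction m using Multiset.induction_on with
  | empty => simp
  | cons a s ih => simp [norm_mul, ih]

/-- A polynomial with no zero in the open unit ball has constant norm there. -/
lemma PadicCE.norm_eval_eq [IsAlgClosed K] (q : K[X])
    (hq : ∀ z : K, ‖z‖ < 1 → q.eval z ≠ 0) {w : K} (hw : ‖w‖ < 1) :
    ‖q.eval w‖ = ‖q.eval 0‖ := by
  have hq0 : q ≠ 0 := fun h => hq 0 (by simp) (by simp [h])
  have hsplits : q.Splits := IsAlgClosed.splits q
  have hfac := hsplits.eq_prod_roots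
  have hroot : ∀ a ∈ q.roots, (1:ℝ) ≤ ‖a‖ := by
    intro a ha
    by_contra hlt
    exact hq a (not_le.mp hlt) ((Polynomial.mem_roots hq0).mp ha)
  have key : ∀ u : K, ‖u‖ < 1 →
      ‖q.eval u‖ = ‖q.leadingCoeff‖ * ((q.roots.map fun a => ‖a‖).prod) := by
    intro u hu
    conv_lhs => rw [hfac]
    rw [Polynomial.eval_mul, Polynomial.eval_C, norm_mul]
    congr 1
    rw [Polynomial.eval_multiset_prod, PadicCE.norm_multiset_prod,
      Multiset.map_map, Multiset.map_map]
    refine congrArg Multiset.prod (Multiset.map_congr rfl ?_)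
    intro a ha
    simp only [Function.comp_apply, Polynomial.eval_sub, Polynomial.eval_X, Polynomial.eval_C]
    rw [norm_sub_rev]
    exact PadicCE.norm_sub_eq_left (hu.trans_le (hroot a ha))
  rw [key w hw, key 0 (by simp)]

/-- The key estimate: some coefficient of `q₁∘P - (q₂∘P)·X` has norm at least
`‖q₂.coeff 0‖`, where `P = X + X²`. -/
lemma PadicCE.exists_coeff_ge (hnat : ∀ n : ℕ, ‖(n : K)‖ ≤ 1) (q₁ q₂ : K[X]) (hq₂ : q₂ ≠ 0) :
    ∃ j, ‖q₂.coeff 0‖ ≤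
      ‖(q₁.comp (X + X ^ 2) - q₂.comp (X + X ^ 2) * X).coeff j‖ := by
  obtain ⟨m₂, hm₂0, hm₂le, hm₂lt⟩ := PadicCE.exists_max_coeff q₂ hq₂
  have hM : ‖q₂.coeff 0‖ ≤ ‖q₂.coeff m₂‖ := hm₂le 0
  have hgX : ∀ (g : K[X]) (j : ℕ),
      (g * X).coeff j = if 1 ≤ j then g.coeff (j - 1) else 0 := by
    intro g j
    rw [← pow_one (X : K[X]), Polynomial.coeff_mul_X_pow']
  have hXodd : ∀ m : ℕ, ((q₂.comp (X + X ^ 2)) * X).coeff (2 * m + 1)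
      = (q₂.comp (X + X ^ 2)).coeff (2 * m) := by
    intro m
    rw [hgX, if_pos (by omega)]
    congr 1
  by_cases hq₁ : q₁ = 0
  · refine ⟨2 * m₂ + 1, ?_⟩
    rw [hq₁]
    simp only [Polynomial.zero_comp, zero_sub, Polynomial.coeff_neg, norm_neg]
    rw [hXodd, PadicCE.comp_coeff_eq hnat q₂ hm₂0 hm₂lt]
    exact hM
  · obtain ⟨m₁, hm₁0, hm₁le, hm₁lt⟩ := PadicCE.exists_max_coeff q₁ hq₁
    rcases lt_trichotomy ‖q₁.coeff m₁‖ ‖q₂.coeff m₂‖ with hlt | heq | hgt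
    · refine ⟨2 * m₂ + 1, ?_⟩
      rw [Polynomial.coeff_sub, norm_sub_rev]
      have h2 : ‖((q₂.comp (X + X ^ 2)) * X).coeff (2 * m₂ + 1)‖ = ‖q₂.coeff m₂‖ := by
        rw [hXodd, PadicCE.comp_coeff_eq hnat q₂ hm₂0 hm₂lt]
      rw [PadicCE.norm_sub_eq_left (by
        rw [h2]
        exact (PadicCE.comp_coeff_le hnat q₁ hm₁le _).trans_lt hlt), h2]
      exact hM
    · rcases le_or_gt m₁ m₂ with hm | hm
      · refine ⟨2 * m₂ + 1, ?_⟩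
        rw [Polynomial.coeff_sub, norm_sub_rev]
        have h2 : ‖((q₂.comp (X + X ^ 2)) * X).coeff (2 * m₂ + 1)‖ = ‖q₂.coeff m₂‖ := by
          rw [hXodd, PadicCE.comp_coeff_eq hnat q₂ hm₂0 hm₂lt]
        rw [PadicCE.norm_sub_eq_left (by
          rw [h2]
          exact (PadicCE.comp_coeff_lt hnat q₁ hm₁0 hm₁lt (j := 2 * m₂ + 1)
            (by omega)).trans_eq heq), h2]
        exact hM
      · refine ⟨2 * m₁, ?_⟩
        rw [Polynomial.coeff_sub]
        have h1 : ‖(q₁.comp (X + X ^ 2)).coeff (2 * m₁)‖ = ‖q₁.coeff m₁‖ :=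
          PadicCE.comp_coeff_eq hnat q₁ hm₁0 hm₁lt
        have h2 : ‖((q₂.comp (X + X ^ 2)) * X).coeff (2 * m₁)‖ < ‖q₂.coeff m₂‖ := by
          rw [hgX, if_pos (by omega)]
          exact PadicCE.comp_coeff_lt hnat q₂ hm₂0 hm₂lt (by omega)
        rw [PadicCE.norm_sub_eq_left (h2.trans_le (heq.symm.trans h1.symm).le), h1]
        exact hM.trans heq.ge
    · refine ⟨2 * m₁, ?_⟩
      rw [Polynomial.coeff_sub]
      have h1 : ‖(q₁.comp (X + X ^ 2)).coeff (2 * m₁)‖ = ‖q₁.coeff m₁‖ :=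
        PadicCE.comp_coeff_eq hnat q₁ hm₁0 hm₁lt
      have h2 : ‖((q₂.comp (X + X ^ 2)) * X).coeff (2 * m₁)‖ < ‖q₁.coeff m₁‖ := by
        rw [hgX]
        split_ifs
        · exact (PadicCE.comp_coeff_le hnat q₂ hm₂le _).trans_lt hgt
        · rw [norm_zero]; exact norm_pos_iff.mpr hm₁0
      rw [PadicCE.norm_sub_eq_left (h1 ▸ h2), h1]
      exact (hM.trans hgt.le)

end Main
section Point

variable {K : Type*} [NontriviallyNormedField K] [IsUltrametricDist K]

omit [IsUltrametricDist K] in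
/-- In a nontrivially normed algebraically closed field there are elements of norm
arbitrarily close to (and less than) `1`, in the sense that `‖t‖ ^ d` can be made
larger than any `δ < 1`. -/
lemma PadicCE.exists_norm_pow_gt [IsAlgClosed K] (d : ℕ) {δ : ℝ} (hδ : δ < 1) :
    ∃ t : K, 0 < ‖t‖ ∧ ‖t‖ < 1 ∧ δ < ‖t‖ ^ d := by
  obtain ⟨c, hc0, hc1⟩ := NormedField.exists_norm_lt_one K
  set ρ : ℝ := ‖c‖ with hρ
  have htend : Filter.Tendsto (fun k : ℕ => ρ ^ ((d : ℝ) / k)) Filter.atTop (nhds 1) := by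
    have h1 : Filter.Tendsto (fun k : ℕ => ((d : ℝ) / k)) Filter.atTop (nhds 0) :=
      tendsto_const_div_atTop_nhds_zero_nat _
    have h2 : ContinuousAt (fun x : ℝ => ρ ^ x) 0 :=
      Real.continuousAt_const_rpow hc0.ne'
    have := h2.tendsto.comp h1
    simpa [Real.rpow_zero, Function.comp_def] using this
  have hev : ∀ᶠ k : ℕ in Filter.atTop, δ < ρ ^ ((d : ℝ) / k) :=
    htend.eventually (eventually_gt_nhds hδ)
  obtain ⟨k, hkδ, hk1⟩ := ((hev.and (Filter.eventually_ge_atTop 1)).exists)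
  obtain ⟨t, ht⟩ := IsAlgClosed.exists_pow_nat_eq c (n := k) (by omega)
  have htk : ‖t‖ ^ k = ρ := by rw [← norm_pow, ht]
  have ht0 : 0 < ‖t‖ := by
    rcases (norm_nonneg t).lt_or_eq with h | h
    · exact h
    · exfalso; rw [← h] at htk; simp [zero_pow (by omega : k ≠ 0)] at htk
      exact hc0.ne' (by rw [← htk])
  have htval : ‖t‖ = ρ ^ ((1 : ℝ) / k) := by
    have h1 : (‖t‖ ^ (k : ℕ) : ℝ) ^ ((1 : ℝ) / k) = ρ ^ ((1 : ℝ) / k) := by rw [htk]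
    rw [← Real.rpow_natCast ‖t‖ k, ← Real.rpow_mul (norm_nonneg t)] at h1
    rw [← h1, mul_one_div, div_self (by exact_mod_cast (by omega : (k : ℕ) ≠ 0)), Real.rpow_one]
  have htd : ‖t‖ ^ d = ρ ^ ((d : ℝ) / k) := by
    rw [htval, ← Real.rpow_natCast (ρ ^ ((1 : ℝ) / k)) d, ← Real.rpow_mul hc0.le]
    congr 1
    field_simp
  refine ⟨t, ht0, ?_, by rw [htd]; exact hkδ⟩
  rw [htval]
  exact Real.rpow_lt_one hc0.le hc1 (by positivity)

omit [IsUltrametricDist K] in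
/-- Norm-one elements whose power is 1. -/
lemma PadicCE.norm_eq_one_of_pow_eq_one {ζ : K} {N : ℕ} (hN : N ≠ 0) (h : ζ ^ N = 1) :
    ‖ζ‖ = 1 := by
  have h1 : ‖ζ‖ ^ N = 1 := by rw [← norm_pow, h, norm_one]
  rcases lt_trichotomy ‖ζ‖ 1 with hlt | heq | hgt
  · exfalso
    have := pow_lt_one₀ (norm_nonneg ζ) hlt hN
    rw [h1] at this; exact lt_irrefl _ this
  · exact heq
  · exfalso
    have := one_lt_pow₀ hgt hN
    rw [h1] at this; exact lt_irrefl _ this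

/-- From a coefficient of norm `≥ M` we extract a point of the open unit ball where the
polynomial has norm `> δ * M`. -/
lemma PadicCE.exists_eval_gt [IsAlgClosed K] [CharZero K]
    (hN : ∀ m : ℕ, ∃ N : ℕ, m < N ∧ ‖((N : ℕ) : K)‖ = 1)
    (h : K[X]) (j : ℕ) {M δ : ℝ} (hM : 0 < M) (hδ : δ < 1)
    (hcoeff : M ≤ ‖h.coeff j‖) :
    ∃ z : K, ‖z‖ < 1 ∧ δ * M < ‖h.eval z‖ := by
  classical
  have hcj : h.coeff j ≠ 0 := by
    intro h0; rw [h0, norm_zero] at hcoeff; exact absurd (hM.trans_le hcoeff) (lt_irrefl _)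
  set d := h.natDegree with hd
  have hjd : j ≤ d := Polynomial.le_natDegree_of_ne_zero hcj
  obtain ⟨t, ht0, ht1, htδ⟩ := PadicCE.exists_norm_pow_gt (K := K) d hδ
  obtain ⟨N, hdN, hNnorm⟩ := hN d
  have hN0 : N ≠ 0 := by omega
  haveI : NeZero ((N : ℕ) : K) := ⟨by exact_mod_cast (Nat.cast_ne_zero (R := K)).mpr hN0⟩
  obtain ⟨ζ, hζ⟩ := HasEnoughRootsOfUnity.exists_primitiveRoot K N
  have hζ1 : ζ ^ N = 1 := hζ.pow_eq_one
  have hζnorm : ‖ζ‖ = 1 := PadicCE.norm_eq_one_of_pow_eq_one hN0 hζ1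
  -- the averaging sum
  set S : K := ∑ i ∈ Finset.range N, h.eval (t * ζ ^ i) * (ζ ^ i) ^ (N - j) with hS
  have hSval : S = h.coeff j * t ^ j * (N : K) := by
    have heval : ∀ i : ℕ, h.eval (t * ζ ^ i) =
        ∑ k ∈ Finset.range (d + 1), h.coeff k * (t * ζ ^ i) ^ k := by
      intro i; exact Polynomial.eval_eq_sum_range _
    calc S = ∑ i ∈ Finset.range N, ∑ k ∈ Finset.range (d + 1),
          h.coeff k * t ^ k * (ζ ^ (k + (N - j))) ^ i := by
          refine Finset.sum_congr rfl (fun i _ => ?_)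
          rw [heval i, Finset.sum_mul]
          refine Finset.sum_congr rfl (fun k _ => ?_)
          have hx : (ζ ^ (k + (N - j))) ^ i = (ζ ^ i) ^ k * (ζ ^ i) ^ (N - j) := by
            rw [← pow_mul, ← pow_mul, ← pow_mul, ← pow_add]
            congr 1
            ring
          rw [hx, mul_pow]
          ring
      _ = ∑ k ∈ Finset.range (d + 1), h.coeff k * t ^ k *
            ∑ i ∈ Finset.range N, (ζ ^ (k + (N - j))) ^ i := by
          rw [Finset.sum_comm]
          exact Finset.sum_congr rfl (fun k _ => by rw [Finset.mul_sum])
      _ = h.coeff j * t ^ j * (N : K) := by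
          rw [Finset.sum_eq_single j]
          · congr 1
            have : j + (N - j) = N := by omega
            rw [this, hζ1]
            simp
          · intro k hk hkj
            have hkd : k ≤ d := by simpa [Nat.lt_succ_iff] using hk
            have hx1 : ζ ^ (k + (N - j)) ≠ 1 := by
              set e := k + (N - j) with he
              have he0 : 0 < e := by omega
              have heN : e ≠ N := by omega
              have he2 : e < 2 * N := by omega
              rcases lt_or_gt_of_ne heN with hlt | hgt
              · exact hζ.pow_ne_one_of_pos_of_lt he0.ne' hlt
              · have hsp : ζ ^ e = ζ ^ (e - N) := by
                  have h2 : ζ ^ e = ζ ^ (N + (e - N)) := by congr 1; omega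
                  rw [h2, pow_add, hζ1, one_mul]
                rw [hsp]
                exact hζ.pow_ne_one_of_pos_of_lt (by omega) (by omega)
            have : (∑ i ∈ Finset.range N, (ζ ^ (k + (N - j))) ^ i) = 0 := by
              have hgm := geom_sum_mul (ζ ^ (k + (N - j))) N
              rw [← pow_mul, mul_comm (k + (N - j)) N, pow_mul, hζ1, one_pow, sub_self] at hgm
              rcases mul_eq_zero.mp hgm with h' | h'
              · exact h'
              · exact absurd (sub_eq_zero.mp h') hx1
            rw [this, mul_zero]
          · intro hj'
            exact absurd (Finset.mem_range.mpr (by omega)) hj'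
  have hSnorm : δ * M < ‖S‖ := by
    rw [hSval, norm_mul, norm_mul, hNnorm, mul_one, norm_pow]
    calc δ * M < ‖t‖ ^ d * M := by
          exact mul_lt_mul_of_pos_right htδ hM
      _ ≤ ‖t‖ ^ j * M := by
          refine mul_le_mul_of_nonneg_right (pow_le_pow_of_le_one (norm_nonneg t) ht1.le hjd) hM.le
      _ ≤ ‖h.coeff j‖ * ‖t‖ ^ j := by
          rw [mul_comm (‖t‖ ^ j) M]
          exact mul_le_mul_of_nonneg_right hcoeff (by positivity)
  obtain ⟨i, hi, hile⟩ := IsUltrametricDist.exists_norm_finset_sum_le_of_nonempty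
    (Finset.nonempty_range_iff.mpr hN0) (fun i => h.eval (t * ζ ^ i) * (ζ ^ i) ^ (N - j))
  refine ⟨t * ζ ^ i, ?_, ?_⟩
  · rw [norm_mul, norm_pow, hζnorm, one_pow, mul_one]; exact ht1
  · have : ‖h.eval (t * ζ ^ i) * (ζ ^ i) ^ (N - j)‖ = ‖h.eval (t * ζ ^ i)‖ := by
      rw [norm_mul, norm_pow, norm_pow, hζnorm, one_pow, one_pow, mul_one]
    exact hSnorm.trans_le (hile.trans this.le)

end Point
/-- `K` is (a field isometrically isomorphic to) the field `ℂ_p` of `p`-adic complex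
numbers: a complete algebraically closed ultrametric normed field, extending `ℚ_p`
isometrically, in which the elements algebraic over `ℚ_p` are dense. -/
structure IsPadicComplexField (p : ℕ) [Fact p.Prime] (K : Type*)
    [NontriviallyNormedField K] [Algebra ℚ_[p] K] : Prop where
  isAlgClosed : IsAlgClosed K
  completeSpace : CompleteSpace K
  isUltrametricDist : IsUltrametricDist K
  norm_algebraMap : ∀ q : ℚ_[p], ‖algebraMap ℚ_[p] K q‖ = ‖q‖
  dense_algebraic : Dense {x : K | IsAlgebraic ℚ_[p] x}

theorem sup_norm_rational_comp_sub_id_ge_one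
    {p : ℕ} [Fact p.Prime] {K : Type*} [NontriviallyNormedField K] [Algebra ℚ_[p] K]
    (hK : IsPadicComplexField p K)
    (q₁ q₂ : Polynomial K) (hq₂ : ∀ z : K, ‖z‖ < 1 → q₂.eval z ≠ 0) :
    ∀ ε : ℝ, 0 < ε → ∃ z : K, ‖z‖ < 1 ∧
      1 - ε < ‖q₁.eval (z + z ^ 2) / q₂.eval (z + z ^ 2) - z‖ := by
  intro ε hε
  haveI := hK.isUltrametricDist
  haveI := hK.isAlgClosed
  haveI : CharZero K := charZero_of_injective_algebraMap (algebraMap ℚ_[p] K).injective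
  have hcast : ∀ n : ℕ, ‖(n : K)‖ = ‖((n : ℤ) : ℚ_[p])‖ := by
    intro n
    rw [← map_natCast (algebraMap ℚ_[p] K) n, hK.norm_algebraMap]
    norm_cast
  have hnat : ∀ n : ℕ, ‖(n : K)‖ ≤ 1 := fun n => by
    rw [hcast n]; exact Padic.norm_int_le_one _
  have hq₂0 : q₂ ≠ 0 := fun h => hq₂ 0 (by simp) (by simp [h])
  have hM0 : q₂.coeff 0 ≠ 0 := by
    have h0 := hq₂ 0 (by simp)
    rwa [← Polynomial.coeff_zero_eq_eval_zero] at h0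
  have hMpos : (0 : ℝ) < ‖q₂.coeff 0‖ := norm_pos_iff.mpr hM0
  have hN : ∀ m : ℕ, ∃ N : ℕ, m < N ∧ ‖((N : ℕ) : K)‖ = 1 := by
    intro m
    obtain ⟨N, hNge, hNprime⟩ := Nat.exists_infinite_primes (max m p + 1)
    refine ⟨N, by omega, ?_⟩
    have hp : p.Prime := Fact.out
    have hne : ¬ ((p : ℤ) ∣ (N : ℤ)) := by
      rw [Int.natCast_dvd_natCast]
      intro hdvd
      have := (Nat.prime_dvd_prime_iff_eq hp hNprime).mp hdvd
      omega
    have hlt : ¬ ‖((N : ℤ) : ℚ_[p])‖ < 1 := fun hh =>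
      hne ((Padic.norm_intCast_lt_one_iff).mp hh)
    rw [hcast N]
    exact le_antisymm (Padic.norm_int_le_one _) (not_lt.mp hlt)
  obtain ⟨j, hj⟩ := PadicCE.exists_coeff_ge hnat q₁ q₂ hq₂0
  obtain ⟨z, hz1, hzval⟩ := PadicCE.exists_eval_gt hN
    (q₁.comp (X + X ^ 2) - q₂.comp (X + X ^ 2) * X) j hMpos
    (by linarith : 1 - ε < 1) hj
  refine ⟨z, hz1, ?_⟩
  have hzsq : ‖z + z ^ 2‖ < 1 := by
    refine lt_of_le_of_lt (IsUltrametricDist.norm_add_le_max _ _) (max_lt hz1 ?_)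
    rw [norm_pow]
    exact pow_lt_one₀ (norm_nonneg z) hz1 two_ne_zero
  have hq2z : q₂.eval (z + z ^ 2) ≠ 0 := hq₂ _ hzsq
  have hq2norm : ‖q₂.eval (z + z ^ 2)‖ = ‖q₂.coeff 0‖ := by
    rw [PadicCE.norm_eval_eq q₂ hq₂ hzsq, Polynomial.coeff_zero_eq_eval_zero]
  have heval : (q₁.comp (X + X ^ 2) - q₂.comp (X + X ^ 2) * X).eval z
      = q₁.eval (z + z ^ 2) - q₂.eval (z + z ^ 2) * z := by
    simp [Polynomial.eval_comp]
  have hdiv : q₁.eval (z + z ^ 2) / q₂.eval (z + z ^ 2) - z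
      = (q₁.comp (X + X ^ 2) - q₂.comp (X + X ^ 2) * X).eval z / q₂.eval (z + z ^ 2) := by
    rw [heval]
    rw [sub_div, mul_div_cancel_left₀ _ hq2z]
  rw [hdiv, norm_div, hq2norm, lt_div_iff₀ hMpos]
  exact hzval
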